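/- Let w ∼ w' ∈ Σⁿ be neighboring strings compressed by LZ77 with unbounded sliding window (W = n). Then the number t₂ of type-2 blocks among the blocks of Compress(w) satisfies t₂ ≤ (∛9/2)·n^{2/3} + (∛3/2)·n^{1/3} + 1. -/

import Mathlib

/-- A single LZ77 block `[q, len, c]`. -/
structure LZBlock (α : Type*) where
  q : ℕ
  len : ℕ
  c : α

/-- `s_i` (1-indexed start position of the `i`-th block, `i` 0-indexed). -/
def blockStart {α : Type*} (B : List (LZBlock α)) (i : ℕ) : ℕ :=
  1 + ((B.take i).map (fun b => b.len + 1)).sum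

/-- `f_i` (1-indexed final position of the `i`-th block, `i` 0-indexed). -/
def blockFin {α : Type*} (B : List (LZBlock α)) (i : ℕ) : ℕ :=
  ((B.take (i + 1)).map (fun b => b.len + 1)).sum

/-- `ℓ_i`, recovered as `f_i - s_i`. -/
def lenAt {α : Type*} (B : List (LZBlock α)) (i : ℕ) : ℕ :=
  blockFin B i - blockStart B i

/-- Non-overlapping LZ77 parse, sliding window `W`, of the length-`n` string `w`
(1-indexed positions). -/
def IsLZ77Parse {α : Type*} (W n : ℕ) (w : ℕ → α) (B : List (LZBlock α)) : Prop :=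
  ((B.map (fun b => b.len + 1)).sum = n) ∧
  ∀ i : Fin B.length,
    ((B.get i).c = w (blockStart B i.1 + (B.get i).len)) ∧
    ((B.get i).len = 0 → (B.get i).q = 0) ∧
    (0 < (B.get i).len →
      1 ≤ (B.get i).q ∧
      blockStart B i.1 ≤ (B.get i).q + W ∧
      (B.get i).q + (B.get i).len ≤ blockStart B i.1 ∧
      ∀ d < (B.get i).len, w ((B.get i).q + d) = w (blockStart B i.1 + d)) ∧
    (blockStart B i.1 + (B.get i).len + 1 ≤ n →
      ¬ ∃ q', 1 ≤ q' ∧ blockStart B i.1 ≤ q' + W ∧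
          q' + (B.get i).len + 1 ≤ blockStart B i.1 ∧
          ∀ d ≤ (B.get i).len, w (q' + d) = w (blockStart B i.1 + d))

/-- LZ77 parse with self-referencing (unbounded window). -/
def IsLZ77SRParse {α : Type*} (n : ℕ) (w : ℕ → α) (B : List (LZBlock α)) : Prop :=
  ((B.map (fun b => b.len + 1)).sum = n) ∧
  ∀ i : Fin B.length,
    ((B.get i).c = w (blockStart B i.1 + (B.get i).len)) ∧
    ((B.get i).len = 0 → (B.get i).q = 0) ∧
    (0 < (B.get i).len →
      1 ≤ (B.get i).q ∧
      (B.get i).q < blockStart B i.1 ∧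
      ∀ d < (B.get i).len, w ((B.get i).q + d) = w (blockStart B i.1 + d)) ∧
    (blockStart B i.1 + (B.get i).len + 1 ≤ n →
      ¬ ∃ q', 1 ≤ q' ∧ q' < blockStart B i.1 ∧
          ∀ d ≤ (B.get i).len, w (q' + d) = w (blockStart B i.1 + d))

/-- `w ∼ w'`: strings of length `n` differing in exactly one position. -/
def Neighbor {α : Type*} (n : ℕ) (w w' : ℕ → α) : Prop :=
  ∃ j, 1 ≤ j ∧ j ≤ n ∧ w j ≠ w' j ∧ ∀ i, i ≠ j → w i = w' i

/-- `M_i`: the set of (0-indexed) blocks of `B'` that start inside block `i` of `B`. -/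
def Mset {α : Type*} (B B' : List (LZBlock α)) (i : ℕ) : Finset ℕ :=
  (Finset.range B'.length).filter
    (fun k => blockStart B i ≤ blockStart B' k ∧ blockStart B' k ≤ blockFin B i)

/-- Indices of type-`m` blocks of `B` (relative to `B'`). -/
def typeSet {α : Type*} (B B' : List (LZBlock α)) (m : ℕ) : Finset ℕ :=
  (Finset.range B.length).filter (fun i => (Mset B B' i).card = m)

/-- Number of bits used to encode each block. -/
def codeLen (n cardS : ℕ) : ℕ :=
  2 * Nat.clog 2 n + Nat.clog 2 cardS


section AuxCount
open Finset
lemma gauss_aux (m : ℕ) : 2 * ∑ t ∈ range m, (t + 1) = m * (m + 1) := by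
  induction m with
  | zero => simp
  | succ m ih => rw [Finset.sum_range_succ, Nat.mul_add, ih]; ring

lemma sum_cube_aux (K : ℕ) :
    6 * ∑ v ∈ range K, (∑ t ∈ range (v - 1), (t + 1)) = K * (K - 1) * (K - 2) := by
  induction K with
  | zero => simp
  | succ K ih =>
    rw [Finset.sum_range_succ, Nat.mul_add, ih]
    have h6 : 6 * ∑ t ∈ range (K - 1), (t + 1) = 3 * ((K - 1) * K) := by
      have := gauss_aux (K - 1)
      rcases Nat.eq_zero_or_pos K with hK | hK
      · subst hK; simp
      · have hK1 : K - 1 + 1 = K := by omega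
        rw [hK1] at this
        omega
    rw [h6]
    rcases K with _ | _ | m
    · simp
    · simp
    · show (m+2) * (m+2-1) * (m+2-2) + 3 * ((m+2-1) * (m+2)) = (m+3) * (m+3-1) * (m+3-2)
      simp only [Nat.add_sub_cancel, show m+2-1 = m+1 from rfl, show m+3-1 = m+2 from rfl,
        show m+3-2 = m+1 from rfl, show m+2-2 = m from rfl]
      ring

lemma card_small_aux (S : Finset (ℕ × ℕ)) (v : ℕ) :
    (S.filter (fun p => p.1 + p.2 + 2 ≤ v)).card ≤ ∑ t ∈ range (v - 1), (t + 1) := by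
  have hsub : S.filter (fun p => p.1 + p.2 + 2 ≤ v)
      ⊆ (range (v - 1)).biUnion Finset.HasAntidiagonal.antidiagonal := by
    intro p hp
    rw [Finset.mem_filter] at hp
    rw [Finset.mem_biUnion]
    exact ⟨p.1 + p.2, Finset.mem_range.2 (by omega), Finset.HasAntidiagonal.mem_antidiagonal.2 rfl⟩
  calc (S.filter (fun p => p.1 + p.2 + 2 ≤ v)).card
      ≤ ((range (v - 1)).biUnion Finset.HasAntidiagonal.antidiagonal).card := Finset.card_le_card hsub
    _ ≤ ∑ t ∈ range (v - 1), (Finset.HasAntidiagonal.antidiagonal t).card := Finset.card_biUnion_le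
    _ = ∑ t ∈ range (v - 1), (t + 1) := by simp [Finset.Nat.card_antidiagonal]

lemma layer_aux (S : Finset (ℕ × ℕ)) (K : ℕ) :
    ∑ v ∈ range K, (S.filter (fun p => v < p.1 + p.2 + 2)).card
      ≤ ∑ p ∈ S, (p.1 + p.2 + 2) := by
  have h1 : ∀ v, (S.filter (fun p => v < p.1 + p.2 + 2)).card
      = ∑ p ∈ S, if v < p.1 + p.2 + 2 then 1 else 0 := fun v => Finset.card_filter _ _
  simp_rw [h1]
  rw [Finset.sum_comm]
  refine Finset.sum_le_sum (fun p _ => ?_)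
  have h2 : ∑ v ∈ range K, (if v < p.1 + p.2 + 2 then 1 else 0)
      = ((range K).filter (fun v => v < p.1 + p.2 + 2)).card := (Finset.card_filter _ _).symm
  rw [h2]
  calc ((range K).filter (fun v => v < p.1 + p.2 + 2)).card
      ≤ (range (p.1 + p.2 + 2)).card := by
        apply Finset.card_le_card
        intro x hx
        simp only [Finset.mem_filter, Finset.mem_range] at *
        omega
    _ = p.1 + p.2 + 2 := Finset.card_range _

lemma countNat (S : Finset (ℕ × ℕ)) (n K : ℕ) (h : ∑ p ∈ S, (p.1 + p.2 + 2) ≤ n) :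
    6 * (K * S.card) ≤ 6 * n + K * (K - 1) * (K - 2) := by
  have key : ∀ v, S.card ≤ (S.filter (fun p => v < p.1 + p.2 + 2)).card
      + ∑ t ∈ range (v - 1), (t + 1) := by
    intro v
    have hsplit := Finset.card_filter_add_card_filter_not
      (s := S) (p := fun p => v < p.1 + p.2 + 2)
    have hneg : S.filter (fun p => ¬ v < p.1 + p.2 + 2)
        = S.filter (fun p => p.1 + p.2 + 2 ≤ v) := by
      apply Finset.filter_congr; intro p _; simp [not_lt]
    rw [hneg] at hsplit
    have := card_small_aux S v
    omega
  have h2 : K * S.card ≤ (∑ p ∈ S, (p.1 + p.2 + 2))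
      + ∑ v ∈ range K, (∑ t ∈ range (v - 1), (t + 1)) := by
    calc K * S.card = ∑ _v ∈ range K, S.card := by simp [mul_comm]
      _ ≤ ∑ v ∈ range K, ((S.filter (fun p => v < p.1 + p.2 + 2)).card
            + ∑ t ∈ range (v - 1), (t + 1)) := Finset.sum_le_sum (fun v _ => key v)
      _ = (∑ v ∈ range K, (S.filter (fun p => v < p.1 + p.2 + 2)).card)
            + ∑ v ∈ range K, (∑ t ∈ range (v - 1), (t + 1)) := Finset.sum_add_distrib
      _ ≤ _ := by have := layer_aux S K; omega
  have h3 := sum_cube_aux K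
  omega

lemma count_real (S : Finset (ℕ × ℕ)) (n : ℕ) (h : ∑ p ∈ S, (p.1 + p.2 + 2) ≤ n) :
    (S.card : ℝ) ≤ ((3 * n : ℝ) ^ ((2 : ℝ) / 3) + (3 * n : ℝ) ^ ((1 : ℝ) / 3)) / 2 := by
  rcases Nat.eq_zero_or_pos n with rfl | hn
  · have hS : S = ∅ := by
      by_contra hne
      obtain ⟨p, hp⟩ := Finset.nonempty_iff_ne_empty.2 hne
      have := Finset.single_le_sum (f := fun p : ℕ × ℕ => p.1 + p.2 + 2)
        (fun _ _ => Nat.zero_le _) hp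
      omega
    subst hS
    rw [show ((3:ℝ) * (0:ℕ)) = 0 by norm_num, Real.zero_rpow (by norm_num),
      Real.zero_rpow (by norm_num)]
    norm_num
  · set x : ℝ := (3 * n : ℝ) ^ ((1 : ℝ) / 3) with hxdef
    have h3n : (1 : ℝ) ≤ 3 * n := by
      have : (1 : ℝ) ≤ (n : ℝ) := by exact_mod_cast hn
      linarith
    have hx0 : (0 : ℝ) ≤ x := Real.rpow_nonneg (by linarith) _
    have hx1 : (1 : ℝ) ≤ x := by
      rw [hxdef]
      exact Real.one_le_rpow h3n (by norm_num)
    have hx3 : x ^ (3 : ℕ) = 3 * n := by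
      rw [hxdef, ← Real.rpow_natCast ((3 * (n:ℝ)) ^ ((1:ℝ)/3)) 3, ← Real.rpow_mul (by linarith)]
      norm_num
    have hx2 : (3 * (n:ℝ)) ^ ((2 : ℝ) / 3) = x ^ (2 : ℕ) := by
      rw [hxdef, ← Real.rpow_natCast ((3 * (n:ℝ)) ^ ((1:ℝ)/3)) 2, ← Real.rpow_mul (by linarith)]
      norm_num
    set K : ℕ := ⌈x⌉₊ with hKdef
    have hK1 : 1 ≤ K := Nat.ceil_pos.2 (by linarith)
    have hK1r : (1 : ℝ) ≤ (K : ℝ) := by exact_mod_cast hK1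
    have hKx : x ≤ (K : ℝ) := Nat.le_ceil x
    have hKx1 : (K : ℝ) ≤ x + 1 := le_of_lt (Nat.ceil_lt_add_one hx0)
    have hcount := countNat S n K h
    have hcast : ((K * (K - 1) * (K - 2) : ℕ) : ℝ)
        ≤ (K : ℝ) * ((K : ℝ) - 1) * ((K : ℝ) - 2) := by
      rcases le_or_gt 2 K with h2 | h2
      · rw [Nat.cast_mul, Nat.cast_mul, Nat.cast_sub (by omega), Nat.cast_sub (by omega)]
        norm_num
      · have : K = 1 := by omega
        rw [this]
        norm_num
    have hmain : 6 * (K : ℝ) * (S.card : ℝ)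
        ≤ 2 * x ^ (3:ℕ) + (K : ℝ) * ((K : ℝ) - 1) * ((K : ℝ) - 2) := by
      have h1 : ((6 * (K * S.card) : ℕ) : ℝ) ≤ ((6 * n + K * (K - 1) * (K - 2) : ℕ) : ℝ) := by
        exact_mod_cast hcount
      rw [hx3]
      calc 6 * (K : ℝ) * (S.card : ℝ) = 6 * ((K:ℝ) * (S.card:ℝ)) := by ring
        _ ≤ 6 * (n:ℝ) + ((K * (K - 1) * (K - 2) : ℕ) : ℝ) := by exact_mod_cast h1
        _ ≤ 2 * (3 * (n:ℝ)) + (K : ℝ) * ((K : ℝ) - 1) * ((K : ℝ) - 2) := by linarith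
    have hB : ((K:ℝ) - 1) * ((K:ℝ) - 2) ≤ x * x + 3 * x := by
      nlinarith [mul_nonneg (sub_nonneg.2 hx1) (by linarith : (0:ℝ) ≤ 6 - 2*((K:ℝ) - x)),
        mul_nonneg (sub_nonneg.2 hKx) (by linarith : (0:ℝ) ≤ 3 - ((K:ℝ) - x))]
    have hA : 2 * x ^ (3:ℕ) ≤ 2 * (K:ℝ) * x ^ (2:ℕ) := by
      nlinarith [mul_nonneg (sub_nonneg.2 hKx) (sq_nonneg x)]
    have hfin : 6 * (K : ℝ) * (S.card : ℝ) ≤ 6 * (K : ℝ) * ((x ^ (2:ℕ) + x) / 2) := by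
      have hC : (K:ℝ) * (((K:ℝ) - 1) * ((K:ℝ) - 2)) ≤ (K:ℝ) * (x * x + 3 * x) :=
        mul_le_mul_of_nonneg_left hB (by linarith)
      nlinarith [hmain, hA, hC]
    have hKpos : (0:ℝ) < 6 * (K:ℝ) := by linarith
    have := le_of_mul_le_mul_left (by
      calc 6 * (K:ℝ) * (S.card : ℝ) ≤ 6 * (K : ℝ) * ((x ^ (2:ℕ) + x) / 2) := hfin) hKpos
    rw [show (3 * (n:ℕ) : ℝ) = 3 * (n:ℝ) from rfl] at *
    rw [hx2]
    exact this
end AuxCount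

section Struct
variable {α : Type*}

lemma sum_take_le_sum (L : List ℕ) (m : ℕ) : (L.take m).sum ≤ L.sum := by
  conv_rhs => rw [← List.take_append_drop m L]
  rw [List.sum_append]
  omega

lemma take_sum_mono (B : List (LZBlock α)) :
    Monotone (fun i => ((B.take i).map (fun b => b.len + 1)).sum) := by
  apply monotone_nat_of_le_succ
  intro m
  rw [List.take_succ, List.map_append, List.sum_append]
  omega

lemma bs_mono (B : List (LZBlock α)) : Monotone (blockStart B) := by
  intro a b hab
  exact Nat.add_le_add_left (take_sum_mono B hab) 1

lemma bf_eq (B : List (LZBlock α)) (i : ℕ) (h : i < B.length) :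
    blockFin B i = blockStart B i + (B.get ⟨i, h⟩).len := by
  unfold blockFin blockStart
  rw [List.take_succ, List.map_append, List.sum_append, List.getElem?_eq_getElem h]
  simp [List.get_eq_getElem]
  omega

lemma bs_succ (B : List (LZBlock α)) (i : ℕ) :
    blockStart B (i + 1) = blockFin B i + 1 := by
  unfold blockStart blockFin
  omega

lemma one_le_bs (B : List (LZBlock α)) (i : ℕ) : 1 ≤ blockStart B i := by
  unfold blockStart; omega

lemma bf_lt_bs (B : List (LZBlock α)) {i k : ℕ} (h : i < k) :
    blockFin B i < blockStart B k := by
  have h1 := bs_succ B i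
  have h2 := bs_mono B (show i + 1 ≤ k from h)
  omega

lemma bf_le_sum (B : List (LZBlock α)) (i : ℕ) :
    blockFin B i ≤ (B.map (fun b => b.len + 1)).sum := by
  unfold blockFin
  rw [List.map_take]
  exact sum_take_le_sum _ _

lemma lenAt_eq (B : List (LZBlock α)) (i : ℕ) (h : i < B.length) :
    lenAt B i = (B.get ⟨i, h⟩).len := by
  have := bf_eq B i h
  unfold lenAt
  omega

lemma sum_getD_eq (L : List ℕ) : ∑ i ∈ Finset.range L.length, L.getD i 0 = L.sum := by
  induction L with
  | nil => simp
  | cons a L ih =>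
    rw [List.length_cons, Finset.sum_range_succ']
    simp only [List.getD_cons_succ, List.getD_cons_zero]
    rw [ih, List.sum_cons]
    omega

lemma mem_Mset (B B' : List (LZBlock α)) (i k : ℕ) :
    k ∈ Mset B B' i ↔ k < B'.length ∧
      blockStart B i ≤ blockStart B' k ∧ blockStart B' k ≤ blockFin B i := by
  unfold Mset
  simp [Finset.mem_filter, Finset.mem_range, and_assoc]

end Struct

section Main
variable {α : Type*}

/-- The first `B'`-block starting inside block `i` of `B`. -/
noncomputable def keyIdx (B B' : List (LZBlock α)) (i : ℕ) : ℕ := sInf {k | k ∈ Mset B B' i}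

/-- Position in `w` of the earlier copy of that `B'`-phrase. -/
noncomputable def srcPos (B B' : List (LZBlock α)) (a : α) (i : ℕ) : ℕ :=
  (B.getD i ⟨0, 0, a⟩).q + (blockStart B' (keyIdx B B' i) - blockStart B i)

/-- Signature pair of a type-2 block. -/
noncomputable def phiMap (B B' : List (LZBlock α)) (a : α) (j : ℕ) (i : ℕ) : ℕ × ℕ :=
  (j - srcPos B B' a i, srcPos B B' a i + lenAt B' (keyIdx B B' i) - j)

lemma main_block {n : ℕ} {w w' : ℕ → α} {B B' : List (LZBlock α)}
    (hB : IsLZ77Parse n n w B) (hB' : IsLZ77Parse n n w' B')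
    {j : ℕ} (heq : ∀ i, i ≠ j → w i = w' i)
    {i : ℕ} (hi : i ∈ typeSet B B' 2)
    (hout : ¬ (blockStart B i ≤ j ∧ j ≤ blockFin B i)) :
    (srcPos B B' (w 0) i ≤ j ∧ j ≤ srcPos B B' (w 0) i + lenAt B' (keyIdx B B' i)) ∧
    1 ≤ srcPos B B' (w 0) i ∧
    keyIdx B B' i ∈ Mset B B' i ∧
    lenAt B' (keyIdx B B' i) + 1 ≤ lenAt B i ∧
    blockStart B' (keyIdx B B' i) + lenAt B' (keyIdx B B' i) + 1 ≤ blockFin B i ∧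
    (∀ d ≤ lenAt B' (keyIdx B B' i),
      w' (blockStart B' (keyIdx B B' i) + d) = w (srcPos B B' (w 0) i + d)) := by
  rw [typeSet, Finset.mem_filter, Finset.mem_range] at hi
  obtain ⟨hiB, hcard⟩ := hi
  have hpos : 0 < (Mset B B' i).card := by omega
  have hne : (Mset B B' i).Nonempty := Finset.card_pos.1 hpos
  set k := keyIdx B B' i with hk
  have hkmem : k ∈ Mset B B' i := by
    have : Set.Nonempty {k | k ∈ Mset B B' i} := ⟨hne.choose, hne.choose_spec⟩
    exact Nat.sInf_mem this
  obtain ⟨k2, hk2mem, hk2ne⟩ := Finset.exists_mem_ne (s := Mset B B' i) (by omega) k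
  have hklt : k < k2 := lt_of_le_of_ne (Nat.sInf_le hk2mem) (Ne.symm hk2ne)
  obtain ⟨hkB', hks, hkf⟩ := (mem_Mset B B' i k).1 hkmem
  obtain ⟨hk2B', hk2s, hk2f⟩ := (mem_Mset B B' i k2).1 hk2mem
  have hl' : lenAt B' k = (B'.get ⟨k, hkB'⟩).len := lenAt_eq B' k hkB'
  have hli : lenAt B i = (B.get ⟨i, hiB⟩).len := lenAt_eq B i hiB
  have hA : blockStart B' k + lenAt B' k + 1 ≤ blockFin B i := by
    have e1 := bf_eq B' k hkB'
    have e2 := bs_succ B' k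
    have e3 := bs_mono B' (show k + 1 ≤ k2 from hklt)
    omega
  have hfs : blockFin B i = blockStart B i + (B.get ⟨i, hiB⟩).len := bf_eq B i hiB
  have hlen : lenAt B' k + 1 ≤ lenAt B i := by omega
  have hlipos : 0 < (B.get ⟨i, hiB⟩).len := by omega
  obtain ⟨hq1, hwin, hqlen, hcopy⟩ := (hB.2 ⟨i, hiB⟩).2.2.1 hlipos
  have hqlen' : (B.get ⟨i, hiB⟩).q + (B.get ⟨i, hiB⟩).len ≤ blockStart B i := hqlen
  have hq1' : 1 ≤ (B.get ⟨i, hiB⟩).q := hq1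
  have hcopy' : ∀ d < (B.get ⟨i, hiB⟩).len,
      w ((B.get ⟨i, hiB⟩).q + d) = w (blockStart B i + d) := hcopy
  have hgetD : (B.getD i ⟨0, 0, w 0⟩) = B.get ⟨i, hiB⟩ := by
    rw [List.getD_eq_getElem _ _ hiB, List.get_eq_getElem]
  set P := srcPos B B' (w 0) i with hPdef
  have hPval : P = (B.get ⟨i, hiB⟩).q + (blockStart B' k - blockStart B i) := by
    rw [hPdef, srcPos, hgetD, ← hk]
  have hF1 : ∀ d ≤ lenAt B' k, w' (blockStart B' k + d) = w (P + d) := by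
    intro d hd
    have hnej : blockStart B' k + d ≠ j := by
      intro hcontra
      exact hout (by omega)
    have e1 : w' (blockStart B' k + d) = w (blockStart B' k + d) := (heq _ hnej).symm
    have e2 := hcopy' (blockStart B' k + d - blockStart B i) (by omega)
    have e3 : blockStart B i + (blockStart B' k + d - blockStart B i)
        = blockStart B' k + d := by omega
    have e4 : (B.get ⟨i, hiB⟩).q + (blockStart B' k + d - blockStart B i) = P + d := by omega
    rw [e1, ← e3, ← e2, e4]
  have hP1 : 1 ≤ P := by omega
  have hF2 : P + lenAt B' k + 1 ≤ blockStart B' k := by omega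
  have hn_le : blockFin B i ≤ n := by
    have h1 := bf_le_sum B i
    rw [hB.1] at h1
    exact h1
  have hF3 : P ≤ j ∧ j ≤ P + lenAt B' k := by
    by_contra hcon
    have hprem : blockStart B' k + (B'.get ⟨k, hkB'⟩).len + 1 ≤ n := by omega
    apply (hB'.2 ⟨k, hkB'⟩).2.2.2 hprem
    refine ⟨P, hP1, ?_, ?_, ?_⟩
    · show blockStart B' k ≤ P + n
      have := one_le_bs B' k
      omega
    · show P + (B'.get ⟨k, hkB'⟩).len + 1 ≤ blockStart B' k
      omega
    · show ∀ d ≤ (B'.get ⟨k, hkB'⟩).len, w' (P + d) = w' (blockStart B' k + d)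
      intro d hd
      have hdl : d ≤ lenAt B' k := by omega
      have h1 := hF1 d hdl
      have hnej : P + d ≠ j := by
        intro hcontra
        exact hcon (by omega)
      calc w' (P + d) = w (P + d) := (heq _ hnej).symm
        _ = w' (blockStart B' k + d) := h1.symm
  exact ⟨hF3, hP1, hkmem, hlen, hA, hF1⟩

lemma no_double {n : ℕ} {w w' : ℕ → α} {B' : List (LZBlock α)}
    (hB' : IsLZ77Parse n n w' B')
    {k k' L P : ℕ} (hk : k < B'.length) (hk' : k' < B'.length) (hklt : k < k')
    (hL : lenAt B' k = L) (hL' : lenAt B' k' = L)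
    (hw : ∀ d ≤ L, w' (blockStart B' k + d) = w (P + d))
    (hw' : ∀ d ≤ L, w' (blockStart B' k' + d) = w (P + d))
    (hn : blockStart B' k' + L + 1 ≤ n) : False := by
  have hl1 : lenAt B' k = (B'.get ⟨k, hk⟩).len := lenAt_eq B' k hk
  have hl2 : lenAt B' k' = (B'.get ⟨k', hk'⟩).len := lenAt_eq B' k' hk'
  have hprem : blockStart B' k' + (B'.get ⟨k', hk'⟩).len + 1 ≤ n := by omega
  apply (hB'.2 ⟨k', hk'⟩).2.2.2 hprem
  have e1 := bf_eq B' k hk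
  have e2 := bs_succ B' k
  have e3 := bs_mono B' (show k + 1 ≤ k' from hklt)
  have h1 := one_le_bs B' k
  refine ⟨blockStart B' k, h1, ?_, ?_, ?_⟩
  · show blockStart B' k' ≤ blockStart B' k + n
    omega
  · show blockStart B' k + (B'.get ⟨k', hk'⟩).len + 1 ≤ blockStart B' k'
    omega
  · show ∀ d ≤ (B'.get ⟨k', hk'⟩).len, w' (blockStart B' k + d) = w' (blockStart B' k' + d)
    intro d hd
    have hdl : d ≤ L := by omega
    calc w' (blockStart B' k + d) = w (P + d) := hw d hdl
      _ = w' (blockStart B' k' + d) := (hw' d hdl).symm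

end Main

/-- Lemma: bound on the number of type-2 blocks, `W = n`.
For neighboring strings `w ∼ w' ∈ Σⁿ` compressed by LZ77 with unbounded window,
the number of type-2 blocks satisfies
`t₂ ≤ (∛9/2)·n^(2/3) + (∛3/2)·n^(1/3) + 1`. -/
theorem lz77_typeTwo_count_bound {α : Type*} (n : ℕ) (w w' : ℕ → α)
    (hnb : Neighbor n w w')
    (B B' : List (LZBlock α))
    (hB : IsLZ77Parse n n w B) (hB' : IsLZ77Parse n n w' B') :
    (((typeSet B B' 2).card : ℝ)) ≤
      (9 : ℝ) ^ ((1 : ℝ) / 3) / 2 * (n : ℝ) ^ ((2 : ℝ) / 3)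
        + (3 : ℝ) ^ ((1 : ℝ) / 3) / 2 * (n : ℝ) ^ ((1 : ℝ) / 3) + 1 := by
  classical
  obtain ⟨j, hj1, hjn, hwne, heq⟩ := hnb
  set T := (typeSet B B' 2).filter
    (fun i => ¬ (blockStart B i ≤ j ∧ j ≤ blockFin B i)) with hTdef
  have hmemlen : ∀ i ∈ T, i < B.length := by
    intro i hiT
    rw [hTdef, Finset.mem_filter, typeSet, Finset.mem_filter, Finset.mem_range] at hiT
    exact hiT.1.1
  have huniq : ((typeSet B B' 2).filter
      (fun i => blockStart B i ≤ j ∧ j ≤ blockFin B i)).card ≤ 1 := by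
    rw [Finset.card_le_one]
    intro a ha b hb
    rw [Finset.mem_filter] at ha hb
    by_contra hab
    rcases Nat.lt_or_ge a b with h | h
    · have := bf_lt_bs B h
      have h1 := ha.2
      have h2 := hb.2
      omega
    · have hba : b < a := by omega
      have := bf_lt_bs B hba
      have h1 := ha.2
      have h2 := hb.2
      omega
  have hsplit : (typeSet B B' 2).card ≤ T.card + 1 := by
    have h1 := Finset.card_filter_add_card_filter_not
      (s := typeSet B B' 2) (p := fun i => blockStart B i ≤ j ∧ j ≤ blockFin B i)
    rw [hTdef]
    omega
  have hinj2 : ∀ x ∈ T, ∀ y ∈ T, phiMap B B' (w 0) j x = phiMap B B' (w 0) j y → x = y := by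
    intro a ha b hb hab
    by_contra hne
    rw [hTdef, Finset.mem_filter] at ha hb
    obtain ⟨F3a, _, hka, hlena, hAa, hF1a⟩ := main_block hB hB' heq ha.1 ha.2
    obtain ⟨F3b, _, hkb, hlenb, hAb, hF1b⟩ := main_block hB hB' heq hb.1 hb.2
    obtain ⟨hkaB', hkas, hkaf⟩ := (mem_Mset _ _ _ _).1 hka
    obtain ⟨hkbB', hkbs, hkbf⟩ := (mem_Mset _ _ _ _).1 hkb
    have hfan : blockFin B a ≤ n := by
      have := bf_le_sum B a; rw [hB.1] at this; exact this
    have hfbn : blockFin B b ≤ n := by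
      have := bf_le_sum B b; rw [hB.1] at this; exact this
    have hkk : keyIdx B B' a ≠ keyIdx B B' b := by
      intro hEq
      rcases Nat.lt_or_ge a b with h | h
      · have := bf_lt_bs B h
        rw [hEq] at hkaf
        omega
      · have hba : b < a := by omega
        have := bf_lt_bs B hba
        rw [hEq] at hkas
        omega
    have hPab : srcPos B B' (w 0) a = srcPos B B' (w 0) b ∧
        lenAt B' (keyIdx B B' a) = lenAt B' (keyIdx B B' b) := by
      unfold phiMap at hab
      rw [Prod.mk.injEq] at hab
      obtain ⟨h1, h2⟩ := hab
      constructor <;> omega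
    rcases Nat.lt_or_ge (keyIdx B B' a) (keyIdx B B' b) with h | h
    · refine no_double (w := w) hB' hkaB' hkbB' h rfl hPab.2.symm hF1a
        (fun d hd => ?_) (by omega)
      rw [hPab.1]
      exact hF1b d (by omega)
    · have hlt : keyIdx B B' b < keyIdx B B' a := by omega
      refine no_double (w := w) hB' hkbB' hkaB' hlt rfl hPab.2 hF1b
        (fun d hd => ?_) (by omega)
      rw [← hPab.1]
      exact hF1a d (by omega)
  have hcard : (T.image (phiMap B B' (w 0) j)).card = T.card :=
    Finset.card_image_of_injOn (fun x hx y hy hxy => hinj2 x hx y hy hxy)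
  have hsum : ∑ p ∈ T.image (phiMap B B' (w 0) j), (p.1 + p.2 + 2) ≤ n := by
    rw [Finset.sum_image hinj2]
    have hle : ∀ i ∈ T, ((phiMap B B' (w 0) j i).1 + (phiMap B B' (w 0) j i).2 + 2)
        ≤ lenAt B i + 1 := by
      intro i hiT
      rw [hTdef, Finset.mem_filter] at hiT
      obtain ⟨F3, _, _, hlen, _, _⟩ := main_block hB hB' heq hiT.1 hiT.2
      unfold phiMap
      simp only
      omega
    have hT2 : ∀ i ∈ T, lenAt B i + 1 = (B.map (fun b => b.len + 1)).getD i 0 := by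
      intro i hiT
      have hiB := hmemlen i hiT
      rw [lenAt_eq B i hiB, List.getD_eq_getElem _ _ (by simpa using hiB)]
      simp [List.get_eq_getElem]
    calc ∑ i ∈ T, ((phiMap B B' (w 0) j i).1 + (phiMap B B' (w 0) j i).2 + 2)
        ≤ ∑ i ∈ T, (lenAt B i + 1) := Finset.sum_le_sum hle
      _ = ∑ i ∈ T, (B.map (fun b => b.len + 1)).getD i 0 := Finset.sum_congr rfl hT2
      _ ≤ ∑ i ∈ Finset.range (B.map (fun b => b.len + 1)).length,
            (B.map (fun b => b.len + 1)).getD i 0 := by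
          apply Finset.sum_le_sum_of_subset
          intro i hiT
          rw [Finset.mem_range, List.length_map]
          exact hmemlen i hiT
      _ = (B.map (fun b => b.len + 1)).sum := sum_getD_eq _
      _ = n := hB.1
  have hbound := count_real _ n hsum
  rw [hcard] at hbound
  have halg1 : (3 * (n:ℝ)) ^ ((1:ℝ)/3) = (3:ℝ)^((1:ℝ)/3) * (n:ℝ)^((1:ℝ)/3) :=
    Real.mul_rpow (by norm_num) (Nat.cast_nonneg n)
  have halg2 : (3 * (n:ℝ)) ^ ((2:ℝ)/3) = (9:ℝ)^((1:ℝ)/3) * (n:ℝ)^((2:ℝ)/3) := by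
    rw [Real.mul_rpow (by norm_num) (Nat.cast_nonneg n)]
    congr 1
    rw [show (9:ℝ) = 3 ^ (2:ℕ) by norm_num, ← Real.rpow_natCast 3 2,
      ← Real.rpow_mul (by norm_num)]
    norm_num
  have hfinal : ((typeSet B B' 2).card : ℝ) ≤ (T.card : ℝ) + 1 := by
    exact_mod_cast hsplit
  rw [halg1, halg2] at hbound
  linarith
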